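/- Let A > 0, B > 0 and w̄ ≥ 1 be constants. Let (k_ℓ), (a_ℓ), (b_ℓ) be sequences of positive reals with b_ℓ ≤ a_ℓ for all ℓ, k_ℓ/a_ℓ → a for some a ∈ [0,∞), k_ℓ/b_ℓ → b for some b ∈ (0,∞), and suppose ℓ·e^{−δ k_ℓ} → 0 for every δ > 0. Let (A_ℓ) be a sequence of reals with liminf_{ℓ→∞} A_ℓ = A. Define h_ℓ(w) = A_ℓ·log(1 + B w) − (a_ℓ/k_ℓ)·H₂(w/a_ℓ) for w ∈ [0, a_ℓ], and set c = min{ bA/(64(1 + Aa)), 1 }. Then there exists L such that for every ℓ ≥ L, any point w*_ℓ attaining the minimum of h_ℓ over the interval [w̄, b_ℓ] satisfies w*_ℓ = w̄ or w*_ℓ ∈ [c·b_ℓ, b_ℓ]. -/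

import Mathlib

set_option maxHeartbeats 1000000



open Filter

/-- Binary entropy function (natural logarithm); `H2 0 = H2 1 = 0`. -/
noncomputable def H2 (p : ℝ) : ℝ := -p * Real.log p - (1 - p) * Real.log (1 - p)


lemma one_sub_inv_le_log {x : ℝ} (hx : 0 < x) : 1 - 1/x ≤ Real.log x := by
  have h := Real.log_le_sub_one_of_pos (show (0:ℝ) < 1/x by positivity)
  rw [Real.log_div one_ne_zero hx.ne'] at h
  simp only [Real.log_one] at h
  linarith

lemma H2_le {p : ℝ} (h0 : 0 < p) (h1 : p < 1) : H2 p ≤ -p * Real.log p + p := by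
  have h1p : 0 < 1 - p := by linarith
  have := one_sub_inv_le_log h1p
  have : -(1-p) * Real.log (1-p) ≤ p := by
    have h2 : (1-p) * (1 - 1/(1-p)) ≤ (1-p) * Real.log (1-p) :=
      mul_le_mul_of_nonneg_left this (le_of_lt h1p)
    have h3 : (1-p) * (1 - 1/(1-p)) = -p := by field_simp; ring
    linarith
  unfold H2; linarith

lemma H2_ge {p : ℝ} (h0 : 0 ≤ p) (h1 : p ≤ 1) : -p * Real.log p ≤ H2 p := by
  have : (1 - p) * Real.log (1 - p) ≤ 0 :=
    mul_nonpos_of_nonneg_of_nonpos (by linarith) (Real.log_nonpos (by linarith) (by linarith))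
  unfold H2; linarith

lemma H2_nonneg {p : ℝ} (h0 : 0 ≤ p) (h1 : p ≤ 1) : 0 ≤ H2 p := by
  have h2 : (1 - p) * Real.log (1 - p) ≤ 0 :=
    mul_nonpos_of_nonneg_of_nonpos (by linarith) (Real.log_nonpos (by linarith) (by linarith))
  have h3 : p * Real.log p ≤ 0 :=
    mul_nonpos_of_nonneg_of_nonpos h0 (Real.log_nonpos h0 h1)
  unfold H2; linarith

lemma hasDerivAt_H2 {p : ℝ} (h0 : 0 < p) (h1 : p < 1) :
    HasDerivAt H2 (Real.log ((1-p)/p)) p := by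
  have h1p : (0:ℝ) < 1 - p := by linarith
  have d1 : HasDerivAt (fun q : ℝ => -q * Real.log q) (-(Real.log p + 1)) p := by
    have h : HasDerivAt (fun q : ℝ => -(q * Real.log q)) (-(1 * Real.log p + p * p⁻¹)) p :=
      ((hasDerivAt_id' p).mul (Real.hasDerivAt_log h0.ne')).neg
    have hf : (fun q : ℝ => -(q * Real.log q)) = (fun q : ℝ => -q * Real.log q) := by
      funext q; ring
    rw [hf] at h
    exact h.congr_deriv (by rw [one_mul, mul_inv_cancel₀ h0.ne'])
  have d2 : HasDerivAt (fun q : ℝ => -((1 - q) * Real.log (1 - q))) (Real.log (1-p) + 1) p := by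
    have dsub : HasDerivAt (fun q : ℝ => 1 - q) (-1) p := by
      exact (hasDerivAt_id' p).const_sub 1
    have h := (((hasDerivAt_id (1-p)).mul (Real.hasDerivAt_log h1p.ne')).comp p dsub).neg
    have hval : -((1 * Real.log (1 - p) + id (1-p) * (1-p)⁻¹) * -1) = Real.log (1-p) + 1 := by
      simp only [id_eq]; field_simp
    rw [hval] at h
    exact h
  have hsum := d1.add d2
  have heq : ((fun q : ℝ => -q * Real.log q) + fun q => -((1 - q) * Real.log (1 - q))) = H2 := by
    funext q; simp only [Pi.add_apply]; unfold H2; ring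
  rw [heq] at hsum
  refine hsum.congr_deriv ?_
  rw [Real.log_div h1p.ne' h0.ne']
  ring

lemma key (A B w c : ℝ) (hA : 0 < A) (hB : 0 < B) (hw : 1 ≤ w) (hc : 0 < c) (hc1 : c ≤ 1)
    (kk aa bb A'' : ℝ) (hkk : 0 < kk) (haa : 0 < aa) (hbb : 0 < bb) (hba : bb ≤ aa)
    (hA2 : A/2 ≤ A'')
    (h3 : 1 ≤ B*(c*bb))
    (h4 : 32*(c*bb) ≤ A*kk)
    (h6 : 2*(Real.exp 2 * (1+B*w)/B) +
      (1+B*(Real.exp 2 * (1+B*w)/B))/B * Real.log (1+B*bb) ≤ bb/2)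
    (h7 : bb * Real.log bb < (A*B/(2*(1+B*(Real.exp 2 * (1+B*w)/B)))) * kk * (bb/2))
    (w' : ℝ) (hmem : w' ∈ Set.Icc w bb)
    (hmin : IsMinOn (fun x : ℝ => A'' * Real.log (1 + B * x) - (aa / kk) * H2 (x / aa))
      (Set.Icc w bb) w') :
    w' = w ∨ c*bb ≤ w' := by
  have hwpos : (0:ℝ) < w := by linarith
  have h1Bw0 : (0:ℝ) < 1 + B*w := by
    have := mul_pos hB hwpos; linarith only [this]
  set W0 : ℝ := Real.exp 2 * (1+B*w)/B with hW0def
  have hW0pos : 0 < W0 := div_pos (mul_pos (Real.exp_pos 2) h1Bw0) hB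
  by_cases hew : w' = w
  · exact Or.inl hew
  right
  by_contra hlt
  push_neg at hlt
  obtain ⟨hw1, hw2⟩ := hmem
  have hww' : w < w' := lt_of_le_of_ne hw1 (Ne.symm hew)
  have hcb : c*bb ≤ bb := by
    have := mul_nonneg (sub_nonneg.mpr hc1) hbb.le
    linarith only [this]
  have hw'b : w' < bb := lt_of_lt_of_le hlt hcb
  have h1w' : 1 ≤ w' := hw.trans hw1
  have hw'pos : 0 < w' := by linarith
  have hw'a : w' < aa := lt_of_lt_of_le hw'b hba
  have hppos : 0 < w'/aa := by positivity
  have hplt : w'/aa < 1 := by rw [div_lt_one haa]; exact hw'a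
  -- derivative at w' is zero
  have h1Bw' : (0:ℝ) < 1 + B*w' := by
    have := mul_pos hB hw'pos; linarith only [this]
  have hLid : A'' * B * kk = Real.log ((aa - w')/w') * (1+B*w') := by
    have hd1 : HasDerivAt (fun x : ℝ => 1 + B*x) B w' := by
      simpa using ((hasDerivAt_id w').const_mul B).const_add 1
    have dlog : HasDerivAt (fun x : ℝ => Real.log (1+B*x)) ((1+B*w')⁻¹ * B) w' :=
      by have := (Real.hasDerivAt_log h1Bw'.ne').comp w' hd1; exact this
    have ddiv : HasDerivAt (fun x : ℝ => x/aa) (1/aa) w' := by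
      simpa using (hasDerivAt_id w').div_const aa
    have dH : HasDerivAt (fun x : ℝ => H2 (x/aa))
        (Real.log ((1 - w'/aa)/(w'/aa)) * (1/aa)) w' :=
      by have := (hasDerivAt_H2 hppos hplt).comp w' ddiv; exact this
    have dh : HasDerivAt (fun x : ℝ => A'' * Real.log (1 + B * x) - (aa / kk) * H2 (x / aa))
        (A''*((1+B*w')⁻¹ * B) - (aa/kk) * (Real.log ((1 - w'/aa)/(w'/aa)) * (1/aa))) w' :=
      (dlog.const_mul A'').sub (dH.const_mul (aa/kk))
    have hzero := (hmin.isLocalMin (Icc_mem_nhds hww' hw'b)).hasDerivAt_eq_zero dh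
    have hratio : (1 - w'/aa)/(w'/aa) = (aa - w')/w' := by field_simp
    rw [hratio] at hzero
    have e1 : A'' * ((1+B*w')⁻¹ * B) = (aa/kk)*(Real.log ((aa - w')/w')*(1/aa)) := by
      linarith only [hzero]
    field_simp at e1
    have e2 : aa * (A'' * B * kk) = aa * (Real.log ((aa - w')/w') * (1+B*w')) := by
      linear_combination aa * e1
    exact mul_left_cancel₀ haa.ne' e2
  set L : ℝ := Real.log ((aa - w')/w') with hLdef
  have hA''pos : 0 < A'' := by linarith
  have hLpos : 0 < L := by
    have hp : 0 < L * (1+B*w') := by rw [← hLid]; positivity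
    by_contra h
    push_neg at h
    nlinarith only [hp, h, h1Bw']
  -- products used repeatedly
  have p1 : A/2*(B*kk) ≤ A''*(B*kk) :=
    mul_le_mul_of_nonneg_right hA2 (by positivity)
  have p2 : 32*(c*bb)*B ≤ A*kk*B := mul_le_mul_of_nonneg_right h4 hB.le
  -- L ≥ 8
  have hub : 1 + B*w' ≤ 2*(B*(c*bb)) := by
    have := mul_le_mul_of_nonneg_left hlt.le hB.le
    linarith only [this, h3]
  have hL8 : 8 ≤ L := by
    have e2 : L*(1+B*w') ≤ L*(2*(B*(c*bb))) := mul_le_mul_of_nonneg_left hub hLpos.le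
    have e3 : 16*(B*(c*bb)) ≤ L*(1+B*w') := by
      rw [← hLid]; linarith only [p1, p2]
    have hBcb : (0:ℝ) < B*(c*bb) := mul_pos hB (mul_pos hc hbb)
    nlinarith only [e2, e3, hBcb]
  -- exp L facts
  have hsubpos : 0 < aa - w' := by linarith
  have hexpL : Real.exp L = (aa - w')/w' := Real.exp_log (by positivity)
  have haaeq : aa - w' = w' * Real.exp L := by
    rw [hexpL]; field_simp
  have hexpL1 : 1 ≤ Real.exp L := by
    rw [← Real.exp_zero]; exact Real.exp_le_exp.mpr hLpos.le
  have haa_le : aa ≤ 2 * (w' * Real.exp L) := by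
    have := mul_nonneg (sub_nonneg.mpr hexpL1) hw'pos.le
    linarith only [this, haaeq]
  have haa_ge : w' * Real.exp L ≤ aa := by linarith only [haaeq, hw'pos]
  -- log aa ≥ L
  have hlogaa : L ≤ Real.log aa := by
    have h1 : Real.exp L ≤ aa := by
      have := mul_le_mul_of_nonneg_right h1w' (Real.exp_pos L).le
      linarith only [this, haa_ge]
    calc L = Real.log (Real.exp L) := (Real.log_exp L).symm
    _ ≤ Real.log aa := Real.log_le_log (Real.exp_pos L) h1
  -- log(aa/w') ≤ L + 2
  have hlogaw : Real.log (aa/w') ≤ L + 2 := by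
    have h1 : aa/w' ≤ 2*Real.exp L := by
      rw [div_le_iff₀ hw'pos]; linarith only [haa_le]
    have h2 : Real.log (aa/w') ≤ Real.log (2*Real.exp L) :=
      Real.log_le_log (by positivity) h1
    rw [Real.log_mul two_ne_zero (Real.exp_pos L).ne', Real.log_exp] at h2
    have := Real.log_le_sub_one_of_pos (show (0:ℝ) < 2 by norm_num)
    linarith only [h2, this]
  -- entropy upper bound at w'
  have hGw' : (aa/kk) * H2 (w'/aa) ≤ (w'/kk) * (L + 3) := by
    have hle := H2_le hppos hplt
    have hlogp : Real.log (w'/aa) = - Real.log (aa/w') := by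
      rw [← Real.log_inv]; congr 1; field_simp
    have h1 : H2 (w'/aa) ≤ (w'/aa) * (L + 3) := by
      rw [hlogp] at hle
      have h2 : (w'/aa) * Real.log (aa/w') ≤ (w'/aa)*(L+2) :=
        mul_le_mul_of_nonneg_left hlogaw hppos.le
      have h2' : (w'/aa) ≤ 1 := hplt.le
      linarith only [hle, h2, h2']
    calc (aa/kk) * H2 (w'/aa) ≤ (aa/kk) * ((w'/aa)*(L+3)) :=
      mul_le_mul_of_nonneg_left h1 (by positivity)
    _ = (w'/kk)*(L+3) := by field_simp
  -- Step C : compare with value at w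
  have hwbb : w ≤ bb := le_trans hw1 hw2
  have hC : A''*Real.log (1+B*w') - (aa/kk)*H2 (w'/aa)
      ≤ A''*Real.log (1+B*w) - (aa/kk)*H2 (w/aa) :=
    isMinOn_iff.mp hmin w (Set.left_mem_Icc.mpr hwbb)
  have hGw0 : 0 ≤ (aa/kk) * H2 (w/aa) := by
    have hle1 : w/aa ≤ 1 := by rw [div_le_one haa]; linarith
    exact mul_nonneg (by positivity) (H2_nonneg (by positivity) hle1)
  have hCC : A''*(Real.log (1+B*w') - Real.log (1+B*w)) ≤ (w'/kk)*(L+3) := by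
    linarith only [hC, hGw', hGw0]
  -- deduce w' ≤ W0
  have hw'W0 : w' ≤ W0 := by
    have hCCk : A''*(Real.log (1+B*w') - Real.log (1+B*w))*kk ≤ w'*(L+3) := by
      calc A''*(Real.log (1+B*w') - Real.log (1+B*w))*kk
          ≤ (w'/kk)*(L+3)*kk := mul_le_mul_of_nonneg_right hCC hkk.le
      _ = w'*(L+3) := by field_simp
    have hm2 := mul_le_mul_of_nonneg_right hCCk hB.le
    have eq1 : L*(1+B*w')*(Real.log (1+B*w') - Real.log (1+B*w))
        = A''*(Real.log (1+B*w') - Real.log (1+B*w))*kk*B := by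
      rw [← hLid]; ring
    have e2 : L*(1+B*w')*(Real.log (1+B*w') - Real.log (1+B*w)) ≤ B*w'*(L+3) := by
      linarith only [hm2, eq1]
    have e3 : B*w'*(L+3) ≤ (1+B*w')*((11/8)*L) := by
      have q1 : 0 ≤ (L-8)*(B*w') := mul_nonneg (by linarith only [hL8]) (mul_pos hB hw'pos).le
      have q2 : 0 < B*w' := mul_pos hB hw'pos
      linarith only [q1, q2, hLpos]
    have e4 : L*(1+B*w')*(Real.log (1+B*w') - Real.log (1+B*w))
        ≤ L*(1+B*w')*(11/8) := by linarith only [e2, e3]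
    have hP : 0 < L*(1+B*w') := mul_pos hLpos h1Bw'
    have hD118 := le_of_mul_le_mul_left e4 hP
    have e5 : Real.log (1+B*w') ≤ Real.log (1+B*w) + 2 := by linarith only [hD118]
    have e6 : (1+B*w') ≤ Real.exp 2 * (1+B*w) := by
      have h7' := Real.exp_le_exp.mpr e5
      rw [Real.exp_log h1Bw'] at h7'
      rw [Real.exp_add, Real.exp_log h1Bw0] at h7'
      linarith only [h7']
    rw [hW0def, le_div_iff₀ hB]
    linarith only [e6]
  -- Step D : compare with value at bb
  have hD : A''*Real.log (1+B*w') - (aa/kk)*H2 (w'/aa)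
      ≤ A''*Real.log (1+B*bb) - (aa/kk)*H2 (bb/aa) :=
    isMinOn_iff.mp hmin bb (Set.right_mem_Icc.mpr hwbb)
  -- entropy lower bound at bb
  have hGbb : (bb/kk) * (L - Real.log bb) ≤ (aa/kk) * H2 (bb/aa) := by
    have hp0 : 0 ≤ bb/aa := by positivity
    have hp1 : bb/aa ≤ 1 := by rw [div_le_one haa]; exact hba
    have hge := H2_ge hp0 hp1
    have hlogp : Real.log (bb/aa) = Real.log bb - Real.log aa :=
      Real.log_div hbb.ne' haa.ne'
    have h1 : (bb/aa) * (Real.log aa - Real.log bb) ≤ H2 (bb/aa) := by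
      rw [hlogp] at hge; linarith only [hge]
    have h2 : (bb/aa) * (L - Real.log bb) ≤ (bb/aa) * (Real.log aa - Real.log bb) :=
      mul_le_mul_of_nonneg_left (by linarith only [hlogaa]) hp0
    calc (bb/kk)*(L - Real.log bb) = (aa/kk) * ((bb/aa) * (L - Real.log bb)) := by
          field_simp
    _ ≤ (aa/kk) * H2 (bb/aa) :=
      mul_le_mul_of_nonneg_left (le_trans h2 h1) (by positivity)
  have hlogBbb : 0 ≤ Real.log (1+B*bb) := by
    apply Real.log_nonneg
    have := mul_pos hB hbb; linarith only [this]
  have hlogBw' : 0 ≤ Real.log (1+B*w') := by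
    apply Real.log_nonneg
    have := mul_pos hB hw'pos; linarith only [this]
  have hDD : (bb/kk)*(L - Real.log bb) ≤ A''*Real.log (1+B*bb) + (w'/kk)*(L+3) := by
    have := mul_nonneg hA''pos.le hlogBw'
    linarith only [hD, hGbb, hGw', this]
  have hDDk : bb*(L - Real.log bb) ≤ A''*kk*Real.log (1+B*bb) + w'*(L+3) := by
    calc bb*(L - Real.log bb) = (bb/kk)*(L - Real.log bb)*kk := by field_simp
    _ ≤ (A''*Real.log (1+B*bb) + (w'/kk)*(L+3))*kk :=
        mul_le_mul_of_nonneg_right hDD hkk.le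
    _ = A''*kk*Real.log (1+B*bb) + w'*(L+3) := by field_simp
  have h1BW0 : (0:ℝ) < 1 + B*W0 := by
    have := mul_pos hB hW0pos; linarith only [this]
  have hBwW0 : L*(1+B*w') ≤ L*(1+B*W0) := by
    apply mul_le_mul_of_nonneg_left _ hLpos.le
    have := mul_le_mul_of_nonneg_left hw'W0 hB.le
    linarith only [this]
  have hAkkub : A''*kk ≤ L*(1+B*W0)/B := by
    rw [le_div_iff₀ hB]
    calc A''*kk*B = A''*B*kk := by ring
    _ = L*(1+B*w') := hLid
    _ ≤ L*(1+B*W0) := hBwW0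
  have hwL3 : w'*(L+3) ≤ 2*W0*L := by
    have q1 : w'*(L+3) ≤ W0*(L+3) :=
      mul_le_mul_of_nonneg_right hw'W0 (by linarith only [hLpos])
    have q2 : W0*(L+3) ≤ W0*(2*L) :=
      mul_le_mul_of_nonneg_left (by linarith only [hL8]) hW0pos.le
    linarith only [q1, q2]
  have hfin1 : L*(bb - 2*W0 - (1+B*W0)/B * Real.log (1+B*bb)) ≤ bb * Real.log bb := by
    have e1 : A''*kk*Real.log (1+B*bb) ≤ L*((1+B*W0)/B * Real.log (1+B*bb)) := by
      calc A''*kk*Real.log (1+B*bb) ≤ L*(1+B*W0)/B * Real.log (1+B*bb) :=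
        mul_le_mul_of_nonneg_right hAkkub hlogBbb
      _ = L*((1+B*W0)/B * Real.log (1+B*bb)) := by ring
    linarith only [hDDk, e1, hwL3]
  have hfin2 : L*(bb/2) ≤ bb * Real.log bb := by
    have e1 : bb/2 ≤ bb - 2*W0 - (1+B*W0)/B * Real.log (1+B*bb) := by linarith only [h6]
    have e2 : L*(bb/2) ≤ L*(bb - 2*W0 - (1+B*W0)/B * Real.log (1+B*bb)) :=
      mul_le_mul_of_nonneg_left e1 hLpos.le
    linarith only [e2, hfin1]
  have hLlb : A*B/(2*(1+B*W0)) * kk ≤ L := by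
    rw [div_mul_eq_mul_div, div_le_iff₀ (by positivity)]
    calc A*B*kk ≤ 2*(A''*(B*kk)) := by linarith only [p1]
    _ = 2*(L*(1+B*w')) := by rw [← hLid]; ring
    _ ≤ 2*(L*(1+B*W0)) := by linarith only [hBwW0]
    _ = L*(2*(1+B*W0)) := by ring
  have hfin3 : A*B/(2*(1+B*W0)) * kk * (bb/2) ≤ L * (bb/2) :=
    mul_le_mul_of_nonneg_right hLlb (by positivity)
  linarith only [hfin2, hfin3, h7]

/-- For large `ℓ`, any minimizer of `h_ℓ(w) = A_ℓ log(1+Bw) - (a_ℓ/k_ℓ) H₂(w/a_ℓ)` over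
`[w̄, b_ℓ]` is either `w̄` or lies in `[c b_ℓ, b_ℓ]` with
`c = min (bA/(64(1+Aa))) 1`. -/
theorem stmt7 (A B w : ℝ) (hA : 0 < A) (hB : 0 < B) (hw : 1 ≤ w)
    (k a b : ℕ → ℝ) (hkpos : ∀ ℓ, 0 < k ℓ) (hapos : ∀ ℓ, 0 < a ℓ) (hbpos : ∀ ℓ, 0 < b ℓ)
    (hba : ∀ ℓ, b ℓ ≤ a ℓ)
    (a0 : ℝ) (ha0 : 0 ≤ a0)
    (hka : Tendsto (fun ℓ : ℕ => k ℓ / a ℓ) atTop (nhds a0))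
    (b0 : ℝ) (hb0 : 0 < b0)
    (hkb : Tendsto (fun ℓ : ℕ => k ℓ / b ℓ) atTop (nhds b0))
    (hexp : ∀ δ : ℝ, 0 < δ →
      Tendsto (fun ℓ : ℕ => (ℓ : ℝ) * Real.exp (-δ * k ℓ)) atTop (nhds 0))
    (A' : ℕ → ℝ) (hA' : Filter.liminf A' atTop = A) :
    ∃ L : ℕ, ∀ ℓ ≥ L, ∀ w' : ℝ, w' ∈ Set.Icc w (b ℓ) →
      IsMinOn (fun x : ℝ => A' ℓ * Real.log (1 + B * x) - (a ℓ / k ℓ) * H2 (x / a ℓ))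
        (Set.Icc w (b ℓ)) w' →
      w' = w ∨ w' ∈ Set.Icc (min (b0 * A / (64 * (1 + A * a0))) 1 * b ℓ) (b ℓ) := by
  set c : ℝ := min (b0 * A / (64 * (1 + A * a0))) 1 with hcdef
  have hAa0 : (0:ℝ) < 1 + A * a0 := by nlinarith [mul_nonneg hA.le ha0]
  have hc : 0 < c := lt_min (by positivity) one_pos
  have hc1 : c ≤ 1 := min_le_right _ _
  have hcA : 64 * c ≤ A * b0 := by
    have h1 : c ≤ b0 * A / (64 * (1 + A * a0)) := min_le_left _ _
    have h2 : b0 * A / (64 * (1 + A * a0)) ≤ b0 * A / 64 :=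
      div_le_div_of_nonneg_left (by positivity) (by norm_num)
        (by nlinarith [mul_nonneg hA.le ha0])
    have h12 : c ≤ b0 * A / 64 := le_trans h1 h2
    linarith [h12]
  set W0 : ℝ := Real.exp 2 * (1 + B * w) / B with hW0def
  have hwpos : (0:ℝ) < w := by linarith
  have h1Bw0 : (0:ℝ) < 1 + B * w := by nlinarith [mul_pos hB hwpos]
  have hW0pos : 0 < W0 := div_pos (mul_pos (Real.exp_pos 2) h1Bw0) hB
  -- k → ∞
  have hktop : Tendsto k atTop atTop := by
    have h1 := hexp 1 one_pos
    have h2 : Tendsto (fun ℓ : ℕ => Real.exp (-k ℓ)) atTop (nhds 0) := by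
      apply squeeze_zero' (Eventually.of_forall fun ℓ => (Real.exp_pos _).le) _ h1
      filter_upwards [eventually_ge_atTop 1] with ℓ hℓ
      have hcast : (1:ℝ) ≤ (ℓ:ℝ) := by exact_mod_cast hℓ
      have : -(1:ℝ) * k ℓ = -k ℓ := by ring
      rw [this]
      exact le_mul_of_one_le_left (Real.exp_pos _).le hcast
    have h3 : Tendsto (fun ℓ => -k ℓ) atTop atBot := Real.tendsto_exp_comp_nhds_zero.mp h2
    exact tendsto_neg_atBot_iff.mp h3
  -- b → ∞
  have hbub : ∀ᶠ ℓ in atTop, k ℓ / b ℓ ≤ 2 * b0 :=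
    hkb.eventually (eventually_le_nhds (by linarith))
  have hbtop : Tendsto b atTop atTop := by
    rw [tendsto_atTop]
    intro C
    filter_upwards [hbub, hktop.eventually_ge_atTop (2 * b0 * C)] with ℓ h1 h2
    have hb := hbpos ℓ
    rw [div_le_iff₀ hb] at h1
    nlinarith
  -- eventually k ≥ (b0/2) b
  have hkb2 : ∀ᶠ ℓ in atTop, b0 / 2 * b ℓ ≤ k ℓ := by
    have := hkb.eventually (eventually_ge_nhds (by linarith : b0 / 2 < b0))
    filter_upwards [this] with ℓ h1
    have hb := hbpos ℓ
    rw [le_div_iff₀ hb] at h1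
    linarith
  -- eventually A' ≥ A/2
  have hA'ev : ∀ᶠ ℓ in atTop, A / 2 ≤ A' ℓ := by
    have hS : {x : ℝ | ∀ᶠ n in atTop, x ≤ A' n}.Nonempty := by
      by_contra h
      rw [Set.not_nonempty_iff_eq_empty] at h
      rw [Filter.liminf_eq, h, Real.sSup_empty] at hA'
      linarith
    have hlt : A / 2 < sSup {x : ℝ | ∀ᶠ n in atTop, x ≤ A' n} := by
      rw [← Filter.liminf_eq, hA']; linarith
    obtain ⟨x, hxmem, hxgt⟩ := exists_lt_of_lt_csSup hS hlt
    filter_upwards [hxmem] with ℓ h1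
    linarith
  -- E2 : eventually 1 ≤ B*(c*b ℓ)
  have hE2 : ∀ᶠ ℓ in atTop, 1 ≤ B * (c * b ℓ) := by
    filter_upwards [hbtop.eventually_ge_atTop (1 / (B * c))] with ℓ h1
    have hBc : 0 < B * c := mul_pos hB hc
    rw [div_le_iff₀ hBc] at h1
    nlinarith [h1]
  -- E3 : eventually 32*(c*b ℓ) ≤ A*k ℓ
  have hE3 : ∀ᶠ ℓ in atTop, 32 * (c * b ℓ) ≤ A * k ℓ := by
    filter_upwards [hkb2] with ℓ h1
    have e1 : A * (b0 / 2 * b ℓ) ≤ A * k ℓ := mul_le_mul_of_nonneg_left h1 hA.le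
    have e2 : 64 * c * b ℓ ≤ A * b0 * b ℓ := mul_le_mul_of_nonneg_right hcA (hbpos ℓ).le
    nlinarith [e1, e2]
  -- asymptotics : log (1+B*x) =o x  and  log x =o x  along atTop (ℝ)
  have hcomp : Tendsto (fun x : ℝ => 1 + B * x) atTop atTop :=
    tendsto_atTop_add_const_left _ 1 (Tendsto.const_mul_atTop hB tendsto_id)
  have hlo : (fun x : ℝ => Real.log (1 + B * x)) =o[atTop] (fun x : ℝ => x) := by
    have h2 := Real.isLittleO_log_id_atTop.comp_tendsto hcomp
    have h3 : (fun x : ℝ => 1 + B * x) =O[atTop] (fun x : ℝ => x) := by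
      rw [Asymptotics.isBigO_iff]
      refine ⟨1 + B, ?_⟩
      filter_upwards [eventually_ge_atTop (1:ℝ)] with x hx
      rw [Real.norm_eq_abs, Real.norm_eq_abs]
      rw [abs_of_nonneg (by nlinarith [mul_pos hB (by linarith : (0:ℝ) < x)]),
        abs_of_nonneg (by linarith)]
      nlinarith [mul_pos hB (by linarith : (0:ℝ) < x)]
    exact h2.trans_isBigO h3
  -- E4 : eventually (h6 condition at x = b ℓ)
  have hC2pos : 0 < (1 + B * W0) / B := by positivity
  have hE4x : ∀ᶠ x : ℝ in atTop,
      2 * W0 + (1 + B * W0) / B * Real.log (1 + B * x) ≤ x / 2 := by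
    have hc' : (0:ℝ) < 1 / (8 * ((1 + B * W0) / B)) := by positivity
    filter_upwards [hlo.def hc', eventually_ge_atTop (16 * W0),
      eventually_ge_atTop (0:ℝ), (hcomp.eventually_ge_atTop 1)] with x h1 h2 h3 h4
    rw [Real.norm_eq_abs, Real.norm_eq_abs, abs_of_nonneg (Real.log_nonneg h4),
      abs_of_nonneg h3] at h1
    have e1 : (1 + B * W0) / B * Real.log (1 + B * x)
        ≤ (1 + B * W0) / B * (1 / (8 * ((1 + B * W0) / B)) * x) :=
      mul_le_mul_of_nonneg_left h1 hC2pos.le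
    have e2 : (1 + B * W0) / B * (1 / (8 * ((1 + B * W0) / B)) * x) = x / 8 := by
      field_simp
    nlinarith [e1, e2]
  have hE4 : ∀ᶠ ℓ in atTop,
      2 * W0 + (1 + B * W0) / B * Real.log (1 + B * b ℓ) ≤ b ℓ / 2 :=
    hbtop.eventually hE4x
  -- E5 : eventually (h7 condition)
  have hc1pos : 0 < A * B / (2 * (1 + B * W0)) := by positivity
  have hE5x : ∀ᶠ x : ℝ in atTop,
      x * Real.log x < A * B / (2 * (1 + B * W0)) * (b0 / 2 * x) * (x / 2) := by
    set c1 : ℝ := A * B / (2 * (1 + B * W0)) with hc1def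
    have hcc : (0:ℝ) < c1 * b0 / 8 := by positivity
    filter_upwards [Real.isLittleO_log_id_atTop.def hcc, eventually_ge_atTop (1:ℝ)]
      with x h1 h2
    have hx0 : (0:ℝ) < x := by linarith
    rw [Real.norm_eq_abs, Real.norm_eq_abs, id, abs_of_nonneg (Real.log_nonneg h2),
      abs_of_nonneg hx0.le] at h1
    have e1 : x * Real.log x ≤ x * (c1 * b0 / 8 * x) :=
      mul_le_mul_of_nonneg_left h1 hx0.le
    have e2 : x * (c1 * b0 / 8 * x) < c1 * (b0 / 2 * x) * (x / 2) := by
      have : 0 < x * x := mul_pos hx0 hx0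
      nlinarith [mul_pos (mul_pos hcc hx0) hx0]
    linarith
  have hE5 : ∀ᶠ ℓ in atTop,
      b ℓ * Real.log (b ℓ) < A * B / (2 * (1 + B * W0)) * k ℓ * (b ℓ / 2) := by
    filter_upwards [hbtop.eventually hE5x, hkb2] with ℓ h1 h2
    have hb := hbpos ℓ
    have e1 : A * B / (2 * (1 + B * W0)) * (b0 / 2 * b ℓ) * (b ℓ / 2)
        ≤ A * B / (2 * (1 + B * W0)) * k ℓ * (b ℓ / 2) := by
      apply mul_le_mul_of_nonneg_right _ (by positivity)
      exact mul_le_mul_of_nonneg_left h2 hc1pos.le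
    linarith
  -- gather
  obtain ⟨L, hL⟩ := (hA'ev.and (hE2.and (hE3.and (hE4.and hE5)))).exists_forall_of_atTop
  refine ⟨L, fun ℓ hℓ w' hmem hmin => ?_⟩
  obtain ⟨e1, e2, e3, e4, e5⟩ := hL ℓ hℓ
  have := key A B w c hA hB hw hc hc1 (k ℓ) (a ℓ) (b ℓ) (A' ℓ)
    (hkpos ℓ) (hapos ℓ) (hbpos ℓ) (hba ℓ) e1 e2 e3 e4 e5 w' hmem hmin
  rcases this with h | h
  · exact Or.inl h
  · exact Or.inr ⟨h, hmem.2⟩
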